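/- Let 0 → L → M → N → 0 be a short exact sequence of A-modules. If L and N are matrix-realisable, then M is matrix-realisable. -/

import Mathlib

section Realisable

variable {A : Type*} [CommRing A]

/-- `(m₁,…,mₙ)` is an admissible vector for the structure constants `c`,
where `c i s t` denotes `cᵗ_{is}`: `∑ᵢ cᵗ_{is} mᵢ = 0` for all `s, t`. -/
def AdmissibleVec {n d : ℕ} (c : Fin n → Fin d → Fin d → A)
    {M : Type*} [AddCommGroup M] [Module A M] (m : Fin n → M) : Prop :=
  ∀ s t : Fin d, ∑ i, c i s t • m i = 0

/-- The submodule of admissible vectors. -/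
def admissibleVecSub {n d : ℕ} (c : Fin n → Fin d → Fin d → A)
    (M : Type*) [AddCommGroup M] [Module A M] : Submodule A (Fin n → M) where
  carrier := {m | AdmissibleVec c m}
  add_mem' {x y} hx hy := fun s t => by
    simp only [Pi.add_apply, smul_add, Finset.sum_add_distrib, hx s t, hy s t, add_zero]
  zero_mem' := fun s t => by simp
  smul_mem' a x hx := fun s t => by
    simp only [Pi.smul_apply, smul_comm _ a, ← Finset.smul_sum, hx s t, smul_zero]

/-- A vector is realisable if it lies in the image of the natural map
`Aⁿ_ad ⊗_A M → Mⁿ`, i.e. in the span of the vectors `(a₁ • x, …, aₙ • x)` with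
`(a₁,…,aₙ)` an admissible vector of scalars. -/
def RealisableVec {n d : ℕ} (c : Fin n → Fin d → Fin d → A)
    {M : Type*} [AddCommGroup M] [Module A M] (m : Fin n → M) : Prop :=
  m ∈ Submodule.span A
    {v : Fin n → M | ∃ (a : Fin n → A) (x : M), AdmissibleVec c a ∧ v = fun i => a i • x}

/-- `M` is vector-realisable if every admissible vector over `M` is realisable. -/
def VectorRealisable {n d : ℕ} (c : Fin n → Fin d → Fin d → A)
    (M : Type*) [AddCommGroup M] [Module A M] : Prop :=
  ∀ m : Fin n → M, AdmissibleVec c m → RealisableVec c m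

/-- `(m_{st})` is an admissible matrix for the structure constants `c`:
`∑_t cᵗ_{is} m_{ut} = ∑_t cᵘ_{it} m_{ts}` for all `i, s, u`. -/
def AdmissibleMat {n d : ℕ} (c : Fin n → Fin d → Fin d → A)
    {M : Type*} [AddCommGroup M] [Module A M] (m : Fin d → Fin d → M) : Prop :=
  ∀ (i : Fin n) (s u : Fin d), ∑ t, c i s t • m u t = ∑ t, c i t u • m t s

/-- The submodule of admissible matrices. -/
def admissibleMatSub {n d : ℕ} (c : Fin n → Fin d → Fin d → A)
    (M : Type*) [AddCommGroup M] [Module A M] : Submodule A (Fin d → Fin d → M) where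
  carrier := {m | AdmissibleMat c m}
  add_mem' {x y} hx hy := fun i s u => by
    simp only [Pi.add_apply, smul_add, Finset.sum_add_distrib, hx i s u, hy i s u]
  zero_mem' := fun i s u => by simp
  smul_mem' a x hx := fun i s u => by
    simp only [Pi.smul_apply, smul_comm _ a, ← Finset.smul_sum, hx i s u]

/-- A matrix is realisable if it lies in the image of the natural map
`Mat_d(A)_ad ⊗_A M → Mat_d(M)`, i.e. in the span of the matrices `(a_{st} • x)` with
`(a_{st})` an admissible matrix of scalars. -/
def RealisableMat {n d : ℕ} (c : Fin n → Fin d → Fin d → A)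
    {M : Type*} [AddCommGroup M] [Module A M] (m : Fin d → Fin d → M) : Prop :=
  m ∈ Submodule.span A
    {v : Fin d → Fin d → M | ∃ (a : Fin d → Fin d → A) (x : M),
      AdmissibleMat c a ∧ v = fun s t => a s t • x}

/-- The submodule of realisable matrices. -/
def realisableMatSub {n d : ℕ} (c : Fin n → Fin d → Fin d → A)
    (M : Type*) [AddCommGroup M] [Module A M] : Submodule A (Fin d → Fin d → M) :=
  Submodule.span A
    {v : Fin d → Fin d → M | ∃ (a : Fin d → Fin d → A) (x : M),
      AdmissibleMat c a ∧ v = fun s t => a s t • x}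

/-- `M` is matrix-realisable if every admissible matrix over `M` is realisable. -/
def MatrixRealisable {n d : ℕ} (c : Fin n → Fin d → Fin d → A)
    (M : Type*) [AddCommGroup M] [Module A M] : Prop :=
  ∀ m : Fin d → Fin d → M, AdmissibleMat c m → RealisableMat c m

end Realisable

section MyHelpers

variable {A : Type*} [CommRing A] {n d : ℕ} (c : Fin n → Fin d → Fin d → A)
variable {M N : Type*} [AddCommGroup M] [Module A M] [AddCommGroup N] [Module A N]

/-- The induced linear map on matrices. -/
def matMapAux (φ : M →ₗ[A] N) : (Fin d → Fin d → M) →ₗ[A] (Fin d → Fin d → N) where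
  toFun m := fun s t => φ (m s t)
  map_add' x y := by ext s t; simp
  map_smul' a x := by ext s t; simp

lemma realisable_le_admissible_aux : realisableMatSub c M ≤ admissibleMatSub c M := by
  apply Submodule.span_le.2
  rintro v ⟨a, x, ha, rfl⟩
  intro i s u
  simp only [smul_smul, ← Finset.sum_smul]
  congr 1
  simpa [smul_eq_mul] using ha i s u

lemma admissible_map_aux (φ : M →ₗ[A] N) {m : Fin d → Fin d → M} (hm : AdmissibleMat c m) :
    AdmissibleMat c (fun s t => φ (m s t)) := by
  intro i s u
  simp only [← map_smul, ← map_sum, hm i s u]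

lemma realisable_map_aux (φ : M →ₗ[A] N) {m : Fin d → Fin d → M} (hm : RealisableMat c m) :
    RealisableMat c (fun s t => φ (m s t)) := by
  have h2 := Submodule.mem_map_of_mem (f := matMapAux (A := A) φ) hm
  rw [Submodule.map_span] at h2
  refine Submodule.span_mono ?_ h2
  rintro v ⟨w, ⟨a, x, ha, rfl⟩, rfl⟩
  exact ⟨a, φ x, ha, by ext s t; simp [matMapAux]⟩

end MyHelpers

/-- **Lemma 2.6 (matrix version).** Let `A` be a Dedekind domain or a field, `Λ` an `A`-algebra
free of finite rank with basis `λ₁,…,λₙ`, `P` a `Λ`-module free of finite rank over `A` with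
basis `p₁,…,p_d`, and let `c` be the structure constants, `λᵢ • pₛ = ∑ₜ cᵗ_{is} pₜ`.
If `0 → L → M → N → 0` is a short exact sequence of `A`-modules and `L` and `N` are
matrix-realisable, then so is `M`. -/
theorem matrixRealisable_of_shortExact
    {A : Type*} [CommRing A] [IsDomain A]
    (hA : IsDedekindDomain A ∨ IsField A)
    {n d : ℕ}
    (Λ : Type*) [Ring Λ] [Algebra A Λ]
    (P : Type*) [AddCommGroup P] [Module A P] [Module Λ P] [IsScalarTower A Λ P]
    (bΛ : Module.Basis (Fin n) A Λ) (bP : Module.Basis (Fin d) A P)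
    (c : Fin n → Fin d → Fin d → A)
    (hc : ∀ (i : Fin n) (s : Fin d), bΛ i • bP s = ∑ t, c i s t • bP t)
    (L M N : Type*)
    [AddCommGroup L] [Module A L] [AddCommGroup M] [Module A M] [AddCommGroup N] [Module A N]
    (f : L →ₗ[A] M) (g : M →ₗ[A] N)
    (hf : Function.Injective f) (hg : Function.Surjective g)
    (hfg : LinearMap.range f = LinearMap.ker g)
    (hL : MatrixRealisable c L) (hN : MatrixRealisable c N) :
    MatrixRealisable c M := by
  intro m hm
  have hgm : AdmissibleMat c (fun s t => g (m s t)) := admissible_map_aux c g hm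
  have hNm := hN _ hgm
  have hsurj : (fun s t => g (m s t)) ∈
      Submodule.map (matMapAux (A := A) g) (realisableMatSub c M) := by
    refine Submodule.span_le.2 ?_ hNm
    rintro v ⟨a, x, ha, rfl⟩
    obtain ⟨y, hy⟩ := hg x
    exact ⟨fun s t => a s t • y, Submodule.subset_span ⟨a, y, ha, rfl⟩,
      by ext s t; simp [matMapAux, hy]⟩
  obtain ⟨m', hm'real, hm'eq⟩ := hsurj
  have hm'adm : AdmissibleMat c m' := realisable_le_admissible_aux c hm'real
  have hδ : ∀ s t, m s t - m' s t ∈ LinearMap.range f := by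
    intro s t
    rw [hfg, LinearMap.mem_ker, map_sub]
    have := congrFun (congrFun hm'eq s) t
    simp only [matMapAux, LinearMap.coe_mk, AddHom.coe_mk] at this
    rw [this, sub_self]
  choose l hl using hδ
  have hladm : AdmissibleMat c l := by
    intro i s u
    apply hf
    rw [map_sum, map_sum]
    simp only [map_smul, hl]
    have h1 := hm i s u
    have h2 := hm'adm i s u
    simp only [smul_sub, Finset.sum_sub_distrib, h1, h2]
  have h1 : (fun s t => m s t - m' s t) ∈ realisableMatSub c M := by
    have := realisable_map_aux c f (hL l hladm)
    simp only [hl] at this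
    exact this
  have hmem : m ∈ realisableMatSub c M := by
    have := Submodule.add_mem _ h1 hm'real
    have heq : (fun s t => m s t - m' s t) + m' = m := by
      ext s t; simp
    rwa [heq] at this
  exact hmem
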